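/- If the p-value map pv_f : X → [0,1] is surjective, then P_f({x : pv_f(x) ≤ β}) = β for every β ∈ [0,1]. -/

import Mathlib

open MeasureTheory ENNReal

/-- The p-value of `x` w.r.t. a probability density `f`:
`pv_f(x) = P_f({t : f(t) ≤ f(x)})`. -/
noncomputable def pValue {X : Type*} [MeasurableSpace X] (m : Measure X)
    (f : X → ℝ≥0∞) (x : X) : ℝ≥0∞ :=
  ∫⁻ t in {t | f t ≤ f x}, f t ∂m

/-- If the p-value map `pv_f : X → [0,1]` is surjective, then
`P_f({x : pv_f(x) ≤ β}) = β` for every `β ∈ [0,1]`. -/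
theorem pValue_alert_prob_eq_of_surj {X : Type*} [MeasurableSpace X]
    (m : Measure X) [SigmaFinite m] (f : X → ℝ≥0∞) (hf : Measurable f)
    (hf1 : ∫⁻ x, f x ∂m = 1)
    (hsurj : ∀ p : ℝ≥0∞, p ≤ 1 → ∃ x, pValue m f x = p) :
    ∀ β : ℝ≥0∞, β ≤ 1 → ∫⁻ x in {x | pValue m f x ≤ β}, f x ∂m = β := by
  intro β hβ
  obtain ⟨x₀, hx₀⟩ := hsurj β hβ
  set μ := m.withDensity f with hμdef
  have hmeas_le : ∀ c : ℝ≥0∞, MeasurableSet {t : X | f t ≤ c} := fun c =>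
    measurableSet_le hf measurable_const
  have hpv : ∀ x, pValue m f x = μ {t | f t ≤ f x} := fun x =>
    (withDensity_apply f (hmeas_le (f x))).symm
  set F : ℝ≥0∞ → ℝ≥0∞ := fun a => μ {t | f t ≤ a} with hFdef
  have hFmono : Monotone F := fun a b hab =>
    measure_mono (fun t ht => le_trans ht hab)
  set a₀ := f x₀ with ha₀def
  have hFa₀ : F a₀ = β := by rw [← hx₀, hpv]
  have hβfin : β ≠ ∞ := (lt_of_le_of_lt hβ one_lt_top).ne
  -- key : for a ≥ a₀ with F a = β, the "slab" {a₀ < f ≤ a} is μ-null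
  have key : ∀ a, a₀ ≤ a → F a = β → μ {x | a₀ < f x ∧ f x ≤ a} = 0 := by
    intro a ha hFa
    have hBmeas : MeasurableSet {x | a₀ < f x ∧ f x ≤ a} :=
      (measurableSet_lt measurable_const hf).inter (hmeas_le a)
    have hsplit : {t : X | f t ≤ a} = {t | f t ≤ a₀} ∪ {x | a₀ < f x ∧ f x ≤ a} := by
      ext t
      simp only [Set.mem_setOf_eq, Set.mem_union]
      constructor
      · intro h
        rcases le_or_gt (f t) a₀ with h' | h'
        · exact Or.inl h'
        · exact Or.inr ⟨h', h⟩
      · rintro (h | ⟨_, h⟩)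
        · exact le_trans h ha
        · exact h
    have hdisj : Disjoint {t : X | f t ≤ a₀} {x | a₀ < f x ∧ f x ≤ a} := by
      rw [Set.disjoint_left]
      intro t ht ht'
      exact absurd ht (not_le.mpr ht'.1)
    have hadd : F a = F a₀ + μ {x | a₀ < f x ∧ f x ≤ a} := by
      rw [hFdef]
      simp only
      rw [hsplit, measure_union hdisj hBmeas]
    rw [hFa, hFa₀] at hadd
    have h0 : β + μ {x | a₀ < f x ∧ f x ≤ a} = β + 0 := by
      rw [add_zero]; exact hadd.symm
    exact (ENNReal.add_right_inj hβfin).mp h0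
  -- the "flat" part above a₀ is null
  set S : Set ℝ≥0∞ := {a | a₀ ≤ a ∧ F a = β} with hSdef
  have ha₀S : a₀ ∈ S := ⟨le_rfl, hFa₀⟩
  set s := sSup S with hsdef
  have hA : μ {x | a₀ < f x ∧ F (f x) = β} = 0 := by
    by_cases hFs : F s = β
    · have hsub : {x | a₀ < f x ∧ F (f x) = β} ⊆ {x | a₀ < f x ∧ f x ≤ s} := by
        intro x ⟨h1, h2⟩
        exact ⟨h1, le_sSup ⟨le_of_lt h1, h2⟩⟩
      have ha₀s : a₀ ≤ s := le_sSup ha₀S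
      exact le_antisymm (le_trans (measure_mono hsub) (key s ha₀s hFs).le) zero_le
    · obtain ⟨u, humono, hulim, huS⟩ :=
        exists_seq_tendsto_sSup (⟨a₀, ha₀S⟩ : S.Nonempty) (OrderTop.bddAbove S)
      have hus : (⨆ n, u n) = s :=
        tendsto_nhds_unique (tendsto_atTop_iSup humono) hulim
      have hsub : {x | a₀ < f x ∧ F (f x) = β} ⊆ ⋃ n, {x | a₀ < f x ∧ f x ≤ u n} := by
        intro x ⟨h1, h2⟩
        have hxS : f x ∈ S := ⟨le_of_lt h1, h2⟩
        have hlt : f x < s := lt_of_le_of_ne (le_sSup hxS) (by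
          intro h; exact hFs (h ▸ h2))
        rw [← hus] at hlt
        obtain ⟨n, hn⟩ := lt_iSup_iff.mp hlt
        exact Set.mem_iUnion.mpr ⟨n, h1, le_of_lt hn⟩
      have hnull : μ (⋃ n, {x | a₀ < f x ∧ f x ≤ u n}) = 0 :=
        measure_iUnion_null (fun n => key (u n) (huS n).1 (huS n).2)
      exact le_antisymm (le_trans (measure_mono hsub) hnull.le) zero_le
  -- rewrite the goal in terms of μ
  have hTmeas : MeasurableSet {x | pValue m f x ≤ β} := by
    have : {x | pValue m f x ≤ β} = (F ∘ f) ⁻¹' Set.Iic β := by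
      ext x
      simp [hpv, Set.mem_preimage]; rfl
    rw [this]
    exact (hFmono.measurable.comp hf) measurableSet_Iic
  rw [← withDensity_apply f hTmeas]
  -- now compute μ {x | pValue m f x ≤ β}
  have hTeq : {x | pValue m f x ≤ β} = {x | F (f x) ≤ β} := by
    ext x; simp [hpv]; rfl
  rw [hTeq]
  have hlow : β ≤ μ {x | F (f x) ≤ β} := by
    have hsub : {t : X | f t ≤ a₀} ⊆ {x | F (f x) ≤ β} := by
      intro x hx
      exact le_trans (hFmono hx) hFa₀.le
    calc β = F a₀ := hFa₀.symm
    _ ≤ μ {x | F (f x) ≤ β} := measure_mono hsub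
  have hhigh : μ {x | F (f x) ≤ β} ≤ β := by
    have hsub : {x | F (f x) ≤ β} ⊆
        {t : X | f t ≤ a₀} ∪ {x | a₀ < f x ∧ F (f x) = β} := by
      intro x hx
      rcases le_or_gt (f x) a₀ with h | h
      · exact Or.inl h
      · exact Or.inr ⟨h, le_antisymm hx (hFa₀ ▸ hFmono h.le)⟩
    calc μ {x | F (f x) ≤ β} ≤ μ ({t : X | f t ≤ a₀} ∪ {x | a₀ < f x ∧ F (f x) = β}) :=
          measure_mono hsub
    _ ≤ μ {t : X | f t ≤ a₀} + μ {x | a₀ < f x ∧ F (f x) = β} := measure_union_le _ _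
    _ = β + 0 := by rw [hA]; exact congrArg (· + 0) hFa₀
    _ = β := add_zero β
  exact le_antisymm hhigh hlow
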